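/- For u > 0 one has −1 − √(2u) − u < W_{−1}(−e^{−u−1}) < −1 − √(2u) − (2/3)u, where W_{−1} is the lower real branch of the Lambert W function (defined on [−1/e, 0) with values in (−∞, −1]). -/
import Mathlib

open Real

private lemma aux_pos (f f' : ℝ → ℝ) (hd : ∀ x, HasDerivAt f (f' x) x)
    (h0 : f 0 = 0) (hp : ∀ x, 0 < x → 0 < f' x) : ∀ x, 0 < x → 0 < f x := by
  intro x hx
  have hmono : StrictMonoOn f (Set.Ici (0:ℝ)) := by
    apply strictMonoOn_of_deriv_pos (convex_Ici 0)
      (fun y _ => (hd y).continuousAt.continuousWithinAt)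
    intro y hy
    rw [interior_Ici] at hy
    rw [(hd y).deriv]
    exact hp y hy
  have := hmono Set.self_mem_Ici (Set.mem_Ici.mpr hx.le) hx
  rwa [h0] at this

private lemma lemA : ∀ s : ℝ, 0 < s → 0 < 2 * exp s - s ^ 2 - 2 * s - 2 := by
  apply aux_pos _ (fun s => 2 * exp s - 2 * s - 2)
  · intro x
    have h := ((((Real.hasDerivAt_exp x).const_mul 2).sub (hasDerivAt_pow 2 x)).sub
        ((hasDerivAt_id' (x := x)).const_mul 2)).sub_const 2
    exact h.congr_deriv (by push_cast; ring)
  · norm_num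
  · intro x hx
    have := add_one_lt_exp (ne_of_gt hx)
    nlinarith
private lemma lemG3 : ∀ s : ℝ, 0 < s → 0 < 8 * exp (2 * s) + (4 * s - 8) * exp s := by
  intro s hs
  have h1 := add_one_lt_exp (ne_of_gt hs)
  have h2 : exp s ≤ exp (2 * s) := exp_le_exp.mpr (by linarith)
  have h3 := exp_pos s
  nlinarith

private lemma lemG2 : ∀ s : ℝ, 0 < s → 0 < 4 * exp (2 * s) + (4 * s - 12) * exp s + 8 := by
  apply aux_pos _ (fun s => 8 * exp (2 * s) + (4 * s - 8) * exp s)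
  · intro x
    have e2 : HasDerivAt (fun s : ℝ => exp (2 * s)) (exp (2 * x) * (2 * 1)) x :=
      ((hasDerivAt_id' (x := x)).const_mul 2).exp
    have hm := (((hasDerivAt_id' (x := x)).const_mul 4).sub_const 12).mul (Real.hasDerivAt_exp x)
    have h := ((e2.const_mul 4).add hm).add_const 8
    exact h.congr_deriv (by ring)
  · norm_num
  · exact lemG3
private lemma lemG1 : ∀ s : ℝ, 0 < s → 0 < 2 * exp (2 * s) + (4 * s - 16) * exp s + 8 * s + 14 := by
  apply aux_pos _ (fun s => 4 * exp (2 * s) + (4 * s - 12) * exp s + 8)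
  · intro x
    have e2 : HasDerivAt (fun s : ℝ => exp (2 * s)) (exp (2 * x) * (2 * 1)) x :=
      ((hasDerivAt_id' (x := x)).const_mul 2).exp
    have hm := (((hasDerivAt_id' (x := x)).const_mul 4).sub_const 16).mul (Real.hasDerivAt_exp x)
    have h := (((e2.const_mul 2).add hm).add ((hasDerivAt_id' (x := x)).const_mul 8)).add_const 14
    exact h.congr_deriv (by ring)
  · norm_num
  · exact lemG2
private lemma lemG : ∀ s : ℝ, 0 < s →
    0 < exp (2 * s) + (4 * s - 20) * exp s + 4 * s ^ 2 + 14 * s + 19 := by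
  apply aux_pos _ (fun s => 2 * exp (2 * s) + (4 * s - 16) * exp s + 8 * s + 14)
  · intro x
    have e2 : HasDerivAt (fun s : ℝ => exp (2 * s)) (exp (2 * x) * (2 * 1)) x :=
      ((hasDerivAt_id' (x := x)).const_mul 2).exp
    have hm := (((hasDerivAt_id' (x := x)).const_mul 4).sub_const 20).mul (Real.hasDerivAt_exp x)
    have hp := (hasDerivAt_pow 2 x).const_mul 4
    have h := ((((e2.add hm).add hp).add ((hasDerivAt_id' (x := x)).const_mul 14)).add_const 19)
    exact h.congr_deriv (by push_cast; ring)
  · norm_num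
  · exact lemG1

/-- For `u > 0`, `−1 − √(2u) − u < W_{−1}(−e^{−u−1}) < −1 − √(2u) − (2/3)u`, where
`W_{−1}` is the lower real branch of the Lambert W function; here `y = W_{−1}(x)` is
characterised as the unique `y ≤ −1` with `y e^y = x`. -/
theorem stmt10 (u : ℝ) (hu : 0 < u) (y : ℝ) (hy : y ≤ -1)
    (hW : y * Real.exp y = -Real.exp (-u - 1)) :
    -1 - Real.sqrt (2 * u) - u < y ∧ y < -1 - Real.sqrt (2 * u) - (2 / 3) * u := by
  have hyneg : (0:ℝ) < -y := by linarith
  -- take logs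
  have hlog : Real.log (-y) + y = -u - 1 := by
    have h1 : (-y) * Real.exp y = Real.exp (-u - 1) := by linarith [hW]
    have := congrArg Real.log h1
    rwa [Real.log_mul (ne_of_gt hyneg) (Real.exp_ne_zero y), Real.log_exp,
      Real.log_exp] at this
  set s := Real.log (-y) with hs
  have hys : -y = Real.exp s := (Real.exp_log hyneg).symm
  have hspos : 0 < s := by
    rw [hs, Real.lt_log_iff_exp_lt hyneg, Real.exp_zero]
    by_contra h
    push_neg at h
    have hy1 : -y = 1 := le_antisymm h (by linarith)
    have : s = 0 := by rw [hs, hy1, Real.log_one]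
    rw [this] at hlog
    have : y = -1 := by linarith [hy1]
    rw [this] at hlog
    linarith
  -- u = exp s - 1 - s, y = -exp s
  have hueq : u = Real.exp s - 1 - s := by
    have : y = -Real.exp s := by linarith [hys]
    rw [this] at hlog; linarith
  have hyeq : y = -Real.exp s := by linarith [hys]
  have hexp := Real.exp_pos s
  constructor
  · -- lower bound: need s < sqrt (2u)
    have hA := lemA s hspos
    have hlt : s < Real.sqrt (2 * u) := by
      rw [Real.lt_sqrt hspos.le]
      nlinarith
    nlinarith [hlt]
  · -- upper bound: need sqrt (2u) < (exp s - 1 + 2 s)/3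
    have hG := lemG s hspos
    have h1 := add_one_lt_exp (ne_of_gt hspos)
    have hpos : (0:ℝ) < (Real.exp s - 1 + 2 * s) / 3 := by nlinarith
    have hlt : Real.sqrt (2 * u) < (Real.exp s - 1 + 2 * s) / 3 := by
      rw [Real.sqrt_lt' hpos]
      have hexp2 : Real.exp (2 * s) = Real.exp s * Real.exp s := by
        rw [two_mul, Real.exp_add]
      nlinarith [hG, hexp2]
    nlinarith [hlt]
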